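/- arXiv:math/0302313 — 2 statements merged into one kernel-verified Lean document; each statement's English description precedes it below -/
import Mathlib

section
/- Let Δ be (a+1)-CLeray, i.e., c ≥ a and H̃_{c-a}(lk_Δ S) = 0 for all S with |S| ≥ a (where c-1 is the frame dimension of Δ). Then every restriction Δ_R (R ⊆ [n]) is also (a+1)-CLeray. -/
open Finset

namespace SCx

variable (k : Type) [Field k] {n : ℕ}

/-- An (abstract) simplicial complex on the vertex set `Fin n`:
a set of finsets closed under taking subsets. -/
def IsComplex (Δ : Set (Finset (Fin n))) : Prop :=
  ∀ F ∈ Δ, ∀ G ⊆ F, G ∈ Δ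

/-- Simplicial `p`-chains with coefficients in `k`: functions on the faces of
cardinality `p+1`. -/
abbrev Chains (Δ : Set (Finset (Fin n))) (p : ℤ) : Type :=
  {F : Finset (Fin n) // F ∈ Δ ∧ (F.card : ℤ) = p + 1} → k

open Classical in
/-- The underlying function of the simplicial boundary map, written via its
transpose formula:
`(∂ f) G = ∑_{x : insert x G ∈ Δ} (-1)^{pos of x in insert x G} f (insert x G)`. -/
noncomputable def boundaryFun (Δ : Set (Finset (Fin n))) (p : ℤ)
    (f : Chains k Δ p) : Chains k Δ (p - 1) := fun G => ∑ x : Fin n,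
  if h : x ∉ G.1 ∧ insert x G.1 ∈ Δ then
    (-1 : k) ^ (G.1.filter (fun y => y < x)).card *
      f ⟨insert x G.1, h.2, by
        have hc := G.2.2
        rw [Finset.card_insert_of_notMem h.1]
        push_cast at hc ⊢
        omega⟩
  else 0

/-- The simplicial boundary map. -/
noncomputable def boundary (Δ : Set (Finset (Fin n))) (p : ℤ) :
    Chains k Δ p →ₗ[k] Chains k Δ (p - 1) where
  toFun := boundaryFun k Δ p
  map_add' f g := by
    funext G
    unfold boundaryFun
    rw [Pi.add_apply]
    rw [← Finset.sum_add_distrib]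
    refine Finset.sum_congr rfl fun x _ => ?_
    split_ifs with h
    · rw [Pi.add_apply]; ring
    · rw [add_zero]
  map_smul' c f := by
    funext G
    unfold boundaryFun
    simp only [RingHom.id_apply, Pi.smul_apply, smul_eq_mul, Finset.mul_sum]
    refine Finset.sum_congr rfl fun x _ => ?_
    split_ifs with h
    · ring
    · rw [mul_zero]

/-- Transport of chains along an equality of degrees. -/
noncomputable def chainsCongr (Δ : Set (Finset (Fin n))) {p q : ℤ} (h : p = q) :
    Chains k Δ p ≃ₗ[k] Chains k Δ q := by
  subst h; exact LinearEquiv.refl k _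

noncomputable def cycles (Δ : Set (Finset (Fin n))) (p : ℤ) : Submodule k (Chains k Δ p) :=
  LinearMap.ker (boundary k Δ p)

noncomputable def boundaries (Δ : Set (Finset (Fin n))) (p : ℤ) : Submodule k (Chains k Δ p) :=
  LinearMap.range ((chainsCongr k Δ (show p + 1 - 1 = p by ring)).toLinearMap ∘ₗ
    boundary k Δ (p + 1))

/-- Reduced simplicial homology of `Δ` in degree `p`, with coefficients in the field `k`,
defined as cycles modulo (boundaries intersected with cycles).  With this convention
`H̃_{-1}({∅}) = k`. -/
abbrev ReducedHomology (Δ : Set (Finset (Fin n))) (p : ℤ) :=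
  ↥(cycles k Δ p) ⧸ (Submodule.comap (cycles k Δ p).subtype (boundaries k Δ p))

/-- The Alexander dual of `Δ`. -/
def dual (Δ : Set (Finset (Fin n))) : Set (Finset (Fin n)) := {F | Fᶜ ∉ Δ}

/-- The restriction `Δ_R` of `Δ` to a vertex subset `R`. -/
def restrict (Δ : Set (Finset (Fin n))) (R : Finset (Fin n)) : Set (Finset (Fin n)) :=
  {F | F ∈ Δ ∧ F ⊆ R}

/-- The link `lk_Δ S`. -/
def link (Δ : Set (Finset (Fin n))) (S : Finset (Fin n)) : Set (Finset (Fin n)) :=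
  {F | Disjoint F S ∧ F ∪ S ∈ Δ}

/-- `Δ_R^{S,T} = {F ⊆ R : F ∪ S ∈ Δ}` (for `T` the complement of `R ∪ S`). -/
def sub (Δ : Set (Finset (Fin n))) (R S : Finset (Fin n)) : Set (Finset (Fin n)) :=
  {F | F ⊆ R ∧ F ∪ S ∈ Δ}

/-- `Δ` has dimension `d - 1`, i.e. `d` is the maximal cardinality of a face. -/
def IsDim (Δ : Set (Finset (Fin n))) (d : ℕ) : Prop :=
  (∀ F ∈ Δ, F.card ≤ d) ∧ ∃ F ∈ Δ, F.card = d

/-- `Δ` has frame dimension `c - 1`, i.e. `c` is the largest integer such that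
every `c`-subset of `[n]` is a face of `Δ`. -/
def IsFrame (Δ : Set (Finset (Fin n))) (c : ℕ) : Prop :=
  (∀ F : Finset (Fin n), F.card ≤ c → F ∈ Δ) ∧
    ∃ F : Finset (Fin n), F.card = c + 1 ∧ F ∉ Δ

/-- A facet: a maximal face. -/
def IsFacet (Δ : Set (Finset (Fin n))) (F : Finset (Fin n)) : Prop :=
  F ∈ Δ ∧ ∀ G ∈ Δ, F ⊆ G → F = G


/-! ### Auxiliary development -/

section Aux

/-- Homology-vanishing predicate, in concrete terms. -/
def Hv (Δ : Set (Finset (Fin n))) (p : ℤ) : Prop :=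
  ∀ z : Chains k Δ p, (∀ G, boundaryFun k Δ p z G = 0) →
    ∃ w : Chains k Δ (p + 1), ∀ G : {F : Finset (Fin n) // F ∈ Δ ∧ (F.card : ℤ) = p + 1},
      boundaryFun k Δ (p + 1) w ⟨G.1, G.2.1, by have := G.2.2; omega⟩ = z G

lemma chainsCongr_apply {Δ : Set (Finset (Fin n))} {p q : ℤ} (h : p = q) (f : Chains k Δ p)
    (G : {F : Finset (Fin n) // F ∈ Δ ∧ (F.card : ℤ) = q + 1}) :
    (chainsCongr k Δ h) f G = f ⟨G.1, G.2.1, by rw [h]; exact G.2.2⟩ := by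
  subst h; rfl

lemma bdry_add {Δ : Set (Finset (Fin n))} (p : ℤ) (f g : Chains k Δ p) (G) :
    boundaryFun k Δ p (f + g) G = boundaryFun k Δ p f G + boundaryFun k Δ p g G := by
  have h := map_add (boundary k Δ p) f g
  exact congrFun h G

lemma hv_iff {Δ : Set (Finset (Fin n))} {p : ℤ} :
    Hv k Δ p ↔ Subsingleton (ReducedHomology k Δ p) := by
  rw [Submodule.Quotient.subsingleton_iff, Submodule.comap_subtype_eq_top]
  have hmemc : ∀ z : Chains k Δ p, z ∈ cycles k Δ p ↔ ∀ G, boundaryFun k Δ p z G = 0 := by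
    intro z
    rw [cycles, LinearMap.mem_ker]
    constructor
    · intro h G; exact congrFun h G
    · intro h; funext G; exact h G
  have hmemb : ∀ z : Chains k Δ p, z ∈ boundaries k Δ p ↔
      ∃ w : Chains k Δ (p + 1), ∀ G : {F : Finset (Fin n) // F ∈ Δ ∧ (F.card : ℤ) = p + 1},
        boundaryFun k Δ (p + 1) w ⟨G.1, G.2.1, by have := G.2.2; omega⟩ = z G := by
    intro z
    rw [boundaries, LinearMap.mem_range]
    constructor
    · rintro ⟨w, hw⟩
      refine ⟨w, fun G => ?_⟩
      have := congrFun hw G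
      rw [LinearMap.comp_apply] at this
      rw [← this]
      exact (chainsCongr_apply k _ _ G).symm
    · rintro ⟨w, hw⟩
      refine ⟨w, funext fun G => ?_⟩
      rw [LinearMap.comp_apply, LinearEquiv.coe_coe, chainsCongr_apply k _ _ G]
      exact hw G
  constructor
  · intro h z hz
    exact (hmemb z).2 (h z ((hmemc z).1 hz))
  · intro h z hz
    exact (hmemb z).1 (h ((hmemc z).2 hz))

open Classical in
/-- Extension by zero of a chain on a subcomplex. -/
noncomputable def ext0 {Δ' Δ : Set (Finset (Fin n))} (p : ℤ) (f : Chains k Δ' p) :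
    Chains k Δ p := fun G => if h : G.1 ∈ Δ' then f ⟨G.1, h, G.2.2⟩ else 0

open Classical in
lemma ext0_bdry {Δ' Δ : Set (Finset (Fin n))} (hsub : Δ' ⊆ Δ) (hdc : IsComplex Δ')
    (p : ℤ) (f : Chains k Δ' p)
    (G : {F : Finset (Fin n) // F ∈ Δ ∧ (F.card : ℤ) = (p - 1) + 1}) :
    boundaryFun k Δ p (ext0 k p (Δ := Δ) f) G =
      if h : G.1 ∈ Δ' then boundaryFun k Δ' p f ⟨G.1, h, G.2.2⟩ else 0 := by
  unfold boundaryFun ext0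
  split_ifs with hG
  · refine Finset.sum_congr rfl fun x _ => ?_
    by_cases h1 : x ∉ G.1 ∧ insert x G.1 ∈ Δ'
    · rw [dif_pos ⟨h1.1, hsub h1.2⟩, dif_pos h1, dif_pos h1.2]
    · by_cases h2 : x ∉ G.1 ∧ insert x G.1 ∈ Δ
      · rw [dif_pos h2, dif_neg h1, dif_neg (fun hmem => h1 ⟨h2.1, hmem⟩), mul_zero]
      · rw [dif_neg h2, dif_neg h1]
  · refine Finset.sum_eq_zero fun x _ => ?_
    by_cases h2 : x ∉ G.1 ∧ insert x G.1 ∈ Δ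
    · rw [dif_pos h2, dif_neg, mul_zero]
      intro hmem
      exact hG (hdc _ hmem _ (Finset.subset_insert _ _))
    · rw [dif_neg h2]

/-- The link of a single vertex. -/
def lkv (Γ : Set (Finset (Fin n))) (v : Fin n) : Set (Finset (Fin n)) :=
  {F | v ∉ F ∧ insert v F ∈ Γ}

/-- The antistar of a single vertex. -/
def asv (Γ : Set (Finset (Fin n))) (v : Fin n) : Set (Finset (Fin n)) :=
  {F | F ∈ Γ ∧ v ∉ F}

open Classical in
noncomputable def cone (Γ : Set (Finset (Fin n))) (v : Fin n) (p : ℤ)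
    (u : Chains k (lkv Γ v) p) : Chains k Γ (p + 1) := fun G =>
  if h : v ∈ G.1 then
    (-1 : k) ^ ((G.1.filter (fun y => y < v)).card) *
      u ⟨G.1.erase v, ⟨Finset.notMem_erase _ _, by rw [Finset.insert_erase h]; exact G.2.1⟩,
        by have := G.2.2; rw [Finset.cast_card_erase_of_mem h]; omega⟩
  else 0

noncomputable def restrv (Γ : Set (Finset (Fin n))) (v : Fin n) (p : ℤ)
    (f : Chains k Γ p) : Chains k (asv Γ v) p := fun F => f ⟨F.1, F.2.1.1, F.2.2⟩

noncomputable def lkpart (Γ : Set (Finset (Fin n))) (v : Fin n) (p : ℤ)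
    (f : Chains k Γ (p + 1)) : Chains k (lkv Γ v) p := fun F =>
  (-1 : k) ^ ((F.1.filter (fun y => y < v)).card) *
    f ⟨insert v F.1, F.2.1.2,
      by have := F.2.2; rw [Finset.card_insert_of_notMem F.2.1.1]; omega⟩

lemma filter_lt_erase (G : Finset (Fin n)) (v : Fin n) :
    (G.erase v).filter (fun y => y < v) = G.filter (fun y => y < v) := by
  ext y
  simp only [Finset.mem_filter, Finset.mem_erase]
  constructor
  · rintro ⟨⟨_, hy⟩, hlt⟩; exact ⟨hy, hlt⟩
  · rintro ⟨hy, hlt⟩; exact ⟨⟨ne_of_lt hlt, hy⟩, hlt⟩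

open Classical in
lemma decomp (Γ : Set (Finset (Fin n))) (v : Fin n) (p : ℤ) (f : Chains k Γ (p + 1))
    (G : {F : Finset (Fin n) // F ∈ Γ ∧ (F.card : ℤ) = (p + 1) + 1}) :
    f G = ext0 k (p + 1) (restrv k Γ v (p + 1) f) G + cone k Γ v p (lkpart k Γ v p f) G := by
  unfold ext0 cone restrv lkpart
  by_cases hv : v ∈ G.1
  · rw [dif_neg (fun h : G.1 ∈ asv Γ v => h.2 hv), dif_pos hv, zero_add]
    rw [filter_lt_erase, ← mul_assoc, ← pow_add, ← two_mul, pow_mul, neg_one_sq, one_pow,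
      one_mul]
    congr 1
    exact Subtype.ext (by simp [Finset.insert_erase hv])
  · rw [dif_pos (show G.1 ∈ asv Γ v from ⟨G.2.1, hv⟩), dif_neg hv, add_zero]

lemma chains_arg {Δ : Set (Finset (Fin n))} {p : ℤ} (f : Chains k Δ p)
    {A B : Finset (Fin n)} (h : A = B) (pA : A ∈ Δ ∧ (A.card : ℤ) = p + 1)
    (pB : B ∈ Δ ∧ (B.card : ℤ) = p + 1) : f ⟨A, pA⟩ = f ⟨B, pB⟩ := by
  subst h; rfl

lemma filt_card_insert (s : Finset (Fin n)) (x y : Fin n) (hx : x ∉ s) :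
    ((insert x s).filter (fun z => z < y)).card =
      (s.filter (fun z => z < y)).card + (if x < y then 1 else 0) := by
  rw [Finset.filter_insert]
  split_ifs with h
  · rw [Finset.card_insert_of_notMem (fun hc => hx (Finset.mem_filter.1 hc).1)]
  · rw [add_zero]

open Classical in
lemma cone_bdry (Γ : Set (Finset (Fin n))) (v : Fin n) (p : ℤ)
    (u : Chains k (lkv Γ v) p)
    (G : {F : Finset (Fin n) // F ∈ Γ ∧ (F.card : ℤ) = p + 1 - 1 + 1}) :
    boundaryFun k Γ (p + 1) (cone k Γ v p u) G =
      if hv : v ∈ G.1 then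
        -((-1 : k) ^ ((G.1.filter (fun y => y < v)).card) *
          boundaryFun k (lkv Γ v) p u
            ⟨G.1.erase v,
              ⟨Finset.notMem_erase _ _, by rw [Finset.insert_erase hv]; exact G.2.1⟩,
              by have := G.2.2; rw [Finset.cast_card_erase_of_mem hv]; omega⟩)
      else if h : G.1 ∈ lkv Γ v then u ⟨G.1, h, by have := G.2.2; omega⟩ else 0 := by
  by_cases hv : v ∈ G.1
  · rw [dif_pos hv]
    unfold boundaryFun cone
    rw [Finset.mul_sum, ← Finset.sum_neg_distrib]
    refine Finset.sum_congr rfl fun x _ => ?_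
    by_cases hxv : x = v
    · subst hxv
      rw [dif_neg (fun hh => hh.1 hv), dif_neg
        (fun hh : x ∉ G.1.erase x ∧ insert x (G.1.erase x) ∈ lkv Γ x =>
          hh.2.1 (Finset.mem_insert_self x _)), mul_zero, neg_zero]
    · by_cases h1 : x ∉ G.1 ∧ insert x G.1 ∈ Γ
      · have h2 : x ∉ G.1.erase v ∧ insert x (G.1.erase v) ∈ lkv Γ v := by
          refine ⟨fun hc => h1.1 (Finset.mem_of_mem_erase hc), ?_, ?_⟩
          · intro hc
            rcases Finset.mem_insert.1 hc with h | h
            · exact hxv h.symm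
            · exact Finset.notMem_erase _ _ h
          · show insert v (insert x (G.1.erase v)) ∈ Γ
            rw [Finset.insert_comm, Finset.insert_erase hv]
            exact h1.2
        rw [dif_pos h1, dif_pos h2]
        dsimp only
        rw [dif_pos (Finset.mem_insert_of_mem hv)]
        rw [chains_arg k u (Finset.erase_insert_of_ne hxv) _ ⟨h2.2, by
          have := G.2.2; rw [Finset.card_insert_of_notMem h2.1]; push_cast
          rw [Finset.cast_card_erase_of_mem hv]; omega⟩]
        have hG : insert v (G.1.erase v) = G.1 := Finset.insert_erase hv
        have hA : (G.1.filter (fun y => y < x)).card =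
            ((G.1.erase v).filter (fun y => y < x)).card + (if v < x then 1 else 0) := by
          conv_lhs => rw [← hG]
          exact filt_card_insert _ v x (Finset.notMem_erase _ _)
        have hB : ((insert x G.1).filter (fun y => y < v)).card =
            (G.1.filter (fun y => y < v)).card + (if x < v then 1 else 0) :=
          filt_card_insert _ x v h1.1
        rcases Ne.lt_or_gt hxv with hlt | hlt
        · rw [hA, hB, if_pos hlt, if_neg (asymm hlt), add_zero, pow_add, pow_one]
          ring
        · rw [hA, hB, if_pos hlt, if_neg (asymm hlt), add_zero, pow_add, pow_one]
          ring
      · have h2 : ¬(x ∉ G.1.erase v ∧ insert x (G.1.erase v) ∈ lkv Γ v) := by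
          rintro ⟨hc1, hc2⟩
          apply h1
          constructor
          · intro hx
            exact hc1 (Finset.mem_erase.2 ⟨hxv, hx⟩)
          · have h3 := hc2.2
            rw [Finset.insert_comm, Finset.insert_erase hv] at h3
            exact h3
        rw [dif_neg h1, dif_neg h2, mul_zero, neg_zero]
  · rw [dif_neg hv]
    unfold boundaryFun cone
    rw [Finset.sum_eq_single v]
    · by_cases h1 : v ∉ G.1 ∧ insert v G.1 ∈ Γ
      · have hL : G.1 ∈ lkv Γ v := ⟨hv, h1.2⟩
        rw [dif_pos h1, dif_pos hL]
        dsimp only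
        rw [dif_pos (Finset.mem_insert_self v G.1)]
        rw [chains_arg k u (Finset.erase_insert hv) _ _]
        rw [Finset.filter_insert, if_neg (lt_irrefl v)]
        rw [← mul_assoc, ← pow_add, ← two_mul, pow_mul, neg_one_sq, one_pow, one_mul]
      · rw [dif_neg h1, dif_neg (fun hL : G.1 ∈ lkv Γ v => h1 ⟨hL.1, hL.2⟩)]
    · intro x _ hx
      by_cases h1 : x ∉ G.1 ∧ insert x G.1 ∈ Γ
      · rw [dif_pos h1]
        dsimp only
        rw [dif_neg, mul_zero]
        intro hvm
        rcases Finset.mem_insert.1 hvm with h | h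
        · exact hx h.symm
        · exact hv h
      · rw [dif_neg h1]
    · intro h
      exact absurd (Finset.mem_univ v) h

lemma isComplex_lkv (Γ : Set (Finset (Fin n))) (hΓ : IsComplex Γ) (v : Fin n) :
    IsComplex (lkv Γ v) := by
  intro F hF G hGF
  exact ⟨fun h => hF.1 (hGF h), hΓ _ hF.2 _ (Finset.insert_subset_insert v hGF)⟩

lemma isComplex_asv (Γ : Set (Finset (Fin n))) (hΓ : IsComplex Γ) (v : Fin n) :
    IsComplex (asv Γ v) :=
  fun F hF G hGF => ⟨hΓ _ hF.1 _ hGF, fun h => hF.2 (hGF h)⟩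

lemma lkv_subset_asv (Γ : Set (Finset (Fin n))) (hΓ : IsComplex Γ) (v : Fin n) :
    lkv Γ v ⊆ asv Γ v :=
  fun F hF => ⟨hΓ _ hF.2 _ (Finset.subset_insert _ _), hF.1⟩

lemma neg_one_pow_ne_zero {m : ℕ} : ((-1 : k) ^ m) ≠ 0 :=
  pow_ne_zero _ (neg_ne_zero.mpr one_ne_zero)

open Classical in
lemma lemA (Γ : Set (Finset (Fin n))) (hΓ : IsComplex Γ) (v : Fin n) (d : ℤ)
    (h1 : Hv k Γ d) (h2 : Hv k (lkv Γ v) d) : Hv k (asv Γ v) d := by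
  have hBc : IsComplex (asv Γ v) := isComplex_asv Γ hΓ v
  have hLc : IsComplex (lkv Γ v) := isComplex_lkv Γ hΓ v
  have hBsub : asv Γ v ⊆ Γ := fun F hF => hF.1
  have hLB : lkv Γ v ⊆ asv Γ v := lkv_subset_asv Γ hΓ v
  intro z hz
  have hζ : ∀ G, boundaryFun k Γ d (ext0 k d (Δ := Γ) z) G = 0 := by
    intro G
    rw [ext0_bdry k hBsub hBc d z G]
    split_ifs with h
    · exact hz _
    · rfl
  obtain ⟨w, hw⟩ := h1 (ext0 k d z) hζ
  set u := lkpart k Γ v d w with hu_def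
  set w0 := restrv k Γ v (d + 1) w with hw0_def
  have hwdec : w = ext0 k (d + 1) (Δ := Γ) w0 + cone k Γ v d u :=
    funext fun H => decomp k Γ v d w H
  -- u is a cycle of the link
  have hucyc : ∀ F, boundaryFun k (lkv Γ v) d u F = 0 := by
    intro F
    have hvF : v ∉ F.1 := F.2.1.1
    have hmem : insert v F.1 ∈ Γ := F.2.1.2
    have hcard : ((insert v F.1).card : ℤ) = d + 1 := by
      rw [Finset.card_insert_of_notMem hvF]; have := F.2.2; push_cast; omega
    have e := hw ⟨insert v F.1, hmem, hcard⟩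
    rw [hwdec, bdry_add k (d + 1) _ _ _] at e
    rw [ext0_bdry k hBsub hBc (d + 1) w0 _] at e
    rw [cone_bdry k Γ v d u _] at e
    dsimp only at e
    rw [dif_neg (fun hh : insert v F.1 ∈ asv Γ v => hh.2 (Finset.mem_insert_self v F.1)),
      dif_pos (Finset.mem_insert_self v F.1)] at e
    simp only [ext0] at e
    rw [dif_neg (fun hh : insert v F.1 ∈ asv Γ v => hh.2 (Finset.mem_insert_self v F.1))] at e
    rw [zero_add] at e
    have e2 : (-1 : k) ^ (((insert v F.1).filter (fun y => y < v)).card) *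
        boundaryFun k (lkv Γ v) d u _ = 0 := neg_eq_zero.mp e
    have e3 := (mul_eq_zero.mp e2).resolve_left (neg_one_pow_ne_zero k)
    rw [← e3]
    exact (chains_arg k (boundaryFun k (lkv Γ v) d u)
      (Finset.erase_insert hvF).symm _ _)
  obtain ⟨t, ht⟩ := h2 u hucyc
  refine ⟨w0 + ext0 k (d + 1) (Δ' := lkv Γ v) (Δ := asv Γ v) t, fun G => ?_⟩
  have hGB : G.1 ∈ asv Γ v := G.2.1
  have hvG : v ∉ G.1 := hGB.2
  have e := hw ⟨G.1, hGB.1, G.2.2⟩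
  rw [hwdec, bdry_add k (d + 1) _ _ _] at e
  rw [ext0_bdry k hBsub hBc (d + 1) w0 _] at e
  rw [cone_bdry k Γ v d u _] at e
  dsimp only at e
  rw [dif_pos hGB, dif_neg hvG] at e
  simp only [ext0] at e
  rw [dif_pos hGB] at e
  rw [bdry_add k (d + 1) _ _ _]
  rw [ext0_bdry k hLB hLc (d + 1) t _]
  dsimp only
  split_ifs at e ⊢ with hGL
  · have e2 := ht ⟨G.1, hGL, G.2.2⟩
    have e3 : boundaryFun k (lkv Γ v) (d + 1) t
        ⟨G.1, hGL, by have := G.2.2; omega⟩ = u ⟨G.1, hGL, by have := G.2.2; omega⟩ := e2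
    rw [e3]
    exact e
  · exact e

open Classical in
lemma lemB (Γ : Set (Finset (Fin n))) (hΓ : IsComplex Γ) (v : Fin n) (d : ℤ)
    (h1 : Hv k (asv Γ v) (d + 1)) (h2 : Hv k (lkv Γ v) d) : Hv k Γ (d + 1) := by
  have hBc : IsComplex (asv Γ v) := isComplex_asv Γ hΓ v
  have hLc : IsComplex (lkv Γ v) := isComplex_lkv Γ hΓ v
  have hBsub : asv Γ v ⊆ Γ := fun F hF => hF.1
  have hLB : lkv Γ v ⊆ asv Γ v := lkv_subset_asv Γ hΓ v
  intro z hz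
  set u := lkpart k Γ v d z with hu_def
  set z0 := restrv k Γ v (d + 1) z with hz0_def
  have hzdec : z = ext0 k (d + 1) (Δ := Γ) z0 + cone k Γ v d u :=
    funext fun H => decomp k Γ v d z H
  -- u is a cycle of the link
  have hucyc : ∀ F, boundaryFun k (lkv Γ v) d u F = 0 := by
    intro F
    have hvF : v ∉ F.1 := F.2.1.1
    have hmem : insert v F.1 ∈ Γ := F.2.1.2
    have hcard : ((insert v F.1).card : ℤ) = d + 1 - 1 + 1 := by
      rw [Finset.card_insert_of_notMem hvF]; have := F.2.2; push_cast; omega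
    have e := hz ⟨insert v F.1, hmem, hcard⟩
    rw [hzdec, bdry_add k (d + 1) _ _ _] at e
    rw [ext0_bdry k hBsub hBc (d + 1) z0 _] at e
    rw [cone_bdry k Γ v d u _] at e
    dsimp only at e
    rw [dif_neg (fun hh : insert v F.1 ∈ asv Γ v => hh.2 (Finset.mem_insert_self v F.1)),
      dif_pos (Finset.mem_insert_self v F.1)] at e
    rw [zero_add] at e
    have e2 : (-1 : k) ^ (((insert v F.1).filter (fun y => y < v)).card) *
        boundaryFun k (lkv Γ v) d u _ = 0 := neg_eq_zero.mp e
    have e3 := (mul_eq_zero.mp e2).resolve_left (neg_one_pow_ne_zero k)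
    rw [← e3]
    exact (chains_arg k (boundaryFun k (lkv Γ v) d u)
      (Finset.erase_insert hvF).symm _ _)
  obtain ⟨t, ht⟩ := h2 u hucyc
  have htL : ∀ F : {F : Finset (Fin n) // F ∈ lkv Γ v ∧ (F.card : ℤ) = d + 1},
      boundaryFun k (lkv Γ v) (d + 1) t
        ⟨F.1, F.2.1, by have := F.2.2; omega⟩ = u F := fun F => ht F
  -- y = z0 + (extension of t) is a cycle of the antistar
  set y : Chains k (asv Γ v) (d + 1) := z0 + ext0 k (d + 1) (Δ' := lkv Γ v) t with hy_def
  have hycyc : ∀ F, boundaryFun k (asv Γ v) (d + 1) y F = 0 := by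
    intro F
    have hvF : v ∉ F.1 := F.2.1.2
    have hmemΓ : F.1 ∈ Γ := F.2.1.1
    have e := hz ⟨F.1, hmemΓ, F.2.2⟩
    rw [hzdec, bdry_add k (d + 1) _ _ _] at e
    rw [ext0_bdry k hBsub hBc (d + 1) z0 _] at e
    rw [cone_bdry k Γ v d u _] at e
    dsimp only at e
    rw [dif_pos (show F.1 ∈ asv Γ v from F.2.1), dif_neg hvF] at e
    rw [hy_def, bdry_add k (d + 1) _ _ _]
    rw [ext0_bdry k hLB hLc (d + 1) t _]
    split_ifs at e ⊢ with hFL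
    · rw [htL ⟨F.1, hFL, by have := F.2.2; omega⟩]
      exact e
    · rw [add_zero]
      rw [add_zero] at e
      exact e
  obtain ⟨w0, hw0⟩ := h1 y hycyc
  refine ⟨ext0 k (d + 1 + 1) (Δ' := asv Γ v) (Δ := Γ) w0 - cone k Γ v (d + 1) t, fun G => ?_⟩
  have hbsub : ∀ (f g : Chains k Γ (d + 1 + 1)) X, boundaryFun k Γ (d + 1 + 1) (f - g) X =
      boundaryFun k Γ (d + 1 + 1) f X - boundaryFun k Γ (d + 1 + 1) g X := fun f g X =>
    congrFun (map_sub (boundary k Γ (d + 1 + 1)) f g) X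
  rw [hbsub]
  rw [ext0_bdry k hBsub hBc (d + 1 + 1) w0 _]
  rw [cone_bdry k Γ v (d + 1) t _]
  dsimp only
  by_cases hvG : v ∈ G.1
  · rw [dif_neg (fun hh : G.1 ∈ asv Γ v => hh.2 hvG), dif_pos hvG]
    have hGL : G.1.erase v ∈ lkv Γ v :=
      ⟨Finset.notMem_erase _ _, by rw [Finset.insert_erase hvG]; exact G.2.1⟩
    have hcard : ((G.1.erase v).card : ℤ) = d + 1 := by
      have := G.2.2; rw [Finset.cast_card_erase_of_mem hvG]; omega
    rw [htL ⟨G.1.erase v, hGL, hcard⟩]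
    rw [hu_def]
    simp only [lkpart]
    rw [filter_lt_erase]
    rw [chains_arg k z (Finset.insert_erase hvG) _ _]
    rw [sub_neg_eq_add, zero_add, ← mul_assoc, ← pow_add, ← two_mul, pow_mul, neg_one_sq,
      one_pow, one_mul]
  · have hGB : G.1 ∈ asv Γ v := ⟨G.2.1, hvG⟩
    rw [dif_pos hGB, dif_neg hvG]
    have e := hw0 ⟨G.1, hGB, G.2.2⟩
    have e2 : boundaryFun k (asv Γ v) (d + 1 + 1) w0
        ⟨G.1, hGB, by have := G.2.2; omega⟩ =
        z0 ⟨G.1, hGB, G.2.2⟩ + ext0 k (d + 1) (Δ := asv Γ v) t ⟨G.1, hGB, G.2.2⟩ := e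
    rw [e2]
    simp only [ext0]
    split_ifs with hGL
    · show z0 ⟨G.1, hGB, G.2.2⟩ + t ⟨G.1, hGL, G.2.2⟩ - t ⟨G.1, hGL, G.2.2⟩ = z G
      rw [add_sub_cancel_right]
      rfl
    · rw [add_zero, sub_zero]
      rfl

lemma Hv_no_faces {Δ : Set (Finset (Fin n))} {p : ℤ} (h : ∀ F ∈ Δ, (F.card : ℤ) ≠ p + 1) :
    Hv k Δ p :=
  fun _ _ => ⟨0, fun G => absurd G.2.2 (h G.1 G.2.1)⟩

lemma isComplex_link (Δ : Set (Finset (Fin n))) (hΔ : IsComplex Δ) (S : Finset (Fin n)) :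
    IsComplex (link Δ S) := by
  intro F hF G hGF
  exact ⟨Finset.disjoint_of_subset_left hGF hF.1,
    hΔ _ hF.2 _ (Finset.union_subset_union hGF (Finset.Subset.refl S))⟩

lemma isComplex_restrict (Δ : Set (Finset (Fin n))) (hΔ : IsComplex Δ) (R : Finset (Fin n)) :
    IsComplex (restrict Δ R) :=
  fun F hF G hGF => ⟨hΔ _ hF.1 _ hGF, hGF.trans hF.2⟩

lemma restrict_univ (Γ : Set (Finset (Fin n))) : restrict Γ (Finset.univ : Finset (Fin n)) = Γ := by
  ext F
  simp [restrict]

lemma asv_restrict (X : Set (Finset (Fin n))) (W : Finset (Fin n)) (v : Fin n) :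
    asv (restrict X W) v = restrict X (W.erase v) := by
  ext F
  simp only [asv, restrict, Set.mem_setOf_eq, Finset.subset_erase]
  tauto

lemma lkv_restrict (Δ : Set (Finset (Fin n))) (S W : Finset (Fin n)) (v : Fin n)
    (hvW : v ∈ W) (hvS : v ∉ S) :
    lkv (restrict (link Δ S) W) v = restrict (link Δ (insert v S)) (W.erase v) := by
  ext F
  simp only [lkv, restrict, link, Set.mem_setOf_eq, Finset.disjoint_insert_left,
    Finset.disjoint_insert_right, Finset.insert_union, Finset.union_insert,
    Finset.insert_subset_iff, Finset.subset_erase]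
  tauto

lemma restrict_insert_of_mem (Δ : Set (Finset (Fin n))) (S W : Finset (Fin n)) (v : Fin n)
    (hvS : v ∈ S) : restrict (link Δ S) (insert v W) = restrict (link Δ S) W := by
  ext F
  simp only [restrict, link, Set.mem_setOf_eq]
  constructor
  · rintro ⟨⟨hdis, hmem⟩, hsub⟩
    refine ⟨⟨hdis, hmem⟩, fun x hx => ?_⟩
    rcases Finset.mem_insert.mp (hsub hx) with h | h
    · exact absurd hvS (Finset.disjoint_left.mp hdis (h ▸ hx))
    · exact h
  · rintro ⟨⟨hdis, hmem⟩, hsub⟩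
    exact ⟨⟨hdis, hmem⟩, hsub.trans (Finset.subset_insert _ _)⟩

lemma link_restrict (Δ : Set (Finset (Fin n))) (S R : Finset (Fin n)) (hSR : S ⊆ R) :
    link (restrict Δ R) S = restrict (link Δ S) (R \ S) := by
  ext F
  simp only [link, restrict, Set.mem_setOf_eq, Finset.subset_sdiff, Finset.union_subset_iff]
  constructor
  · rintro ⟨hdis, hmem, hFR, _⟩
    exact ⟨⟨hdis, hmem⟩, hFR, hdis⟩
  · rintro ⟨⟨hdis, hmem⟩, hFR, _⟩
    exact ⟨hdis, hmem, hFR, hSR⟩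

lemma main (Δ : Set (Finset (Fin n))) (hΔ : IsComplex Δ) (a c : ℕ) (hac : a ≤ c)
    (hCL : ∀ S : Finset (Fin n), a ≤ S.card → Hv k (link Δ S) ((c : ℤ) - a)) :
    ∀ (e : ℕ) (W S : Finset (Fin n)), a ≤ S.card →
      Hv k (restrict (link Δ S) W) ((c : ℤ) - a + e) := by
  intro e
  induction e with
  | zero =>
    have key : ∀ (m : ℕ) (W S : Finset (Fin n)), 2 * Wᶜ.card + Sᶜ.card ≤ m → a ≤ S.card →
        Hv k (restrict (link Δ S) W) ((c : ℤ) - a) := by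
      intro m
      induction m with
      | zero =>
        intro W S hm hS
        have hW : W = Finset.univ := by
          have h0 : Wᶜ.card = 0 := by omega
          have h1 : Wᶜ = ∅ := Finset.card_eq_zero.mp h0
          rwa [Finset.compl_eq_empty_iff] at h1
        rw [hW, restrict_univ]
        exact hCL S hS
      | succ m ih =>
        intro W S hm hS
        by_cases hW : W = Finset.univ
        · rw [hW, restrict_univ]
          exact hCL S hS
        · obtain ⟨v, hv⟩ : ∃ v, v ∉ W := by
            by_contra h
            push_neg at h
            exact hW (Finset.eq_univ_iff_forall.mpr h)
          have hvc : v ∈ Wᶜ := Finset.mem_compl.mpr hv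
          have hccard : ((insert v W)ᶜ).card = Wᶜ.card - 1 := by
            rw [Finset.compl_insert, Finset.card_erase_of_mem hvc]
          have hWc1 : 1 ≤ Wᶜ.card := Finset.card_pos.mpr ⟨v, hvc⟩
          by_cases hvS : v ∈ S
          · rw [← restrict_insert_of_mem Δ S W v hvS]
            exact ih (insert v W) S (by omega) hS
          · have h1 : Hv k (restrict (link Δ S) (insert v W)) ((c : ℤ) - a) :=
              ih (insert v W) S (by omega) hS
            have hvSc : v ∈ Sᶜ := Finset.mem_compl.mpr hvS
            have hSc1 : 1 ≤ Sᶜ.card := Finset.card_pos.mpr ⟨v, hvSc⟩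
            have hsccard : ((insert v S)ᶜ).card = Sᶜ.card - 1 := by
              rw [Finset.compl_insert, Finset.card_erase_of_mem hvSc]
            have h2 : Hv k (restrict (link Δ (insert v S)) W) ((c : ℤ) - a) :=
              ih W (insert v S) (by omega)
                (le_trans hS (Finset.card_le_card (Finset.subset_insert _ _)))
            have hAS : asv (restrict (link Δ S) (insert v W)) v = restrict (link Δ S) W := by
              rw [asv_restrict, Finset.erase_insert hv]
            have hLK : lkv (restrict (link Δ S) (insert v W)) v =
                restrict (link Δ (insert v S)) W := by
              rw [lkv_restrict Δ S (insert v W) v (Finset.mem_insert_self v W) hvS,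
                Finset.erase_insert hv]
            rw [← hAS]
            refine lemA k _ ?_ v _ h1 ?_
            · exact isComplex_restrict _ (isComplex_link Δ hΔ S) _
            · rw [hLK]
              exact h2
    intro W S hS
    have hdeg : ((c : ℤ) - a + ((0 : ℕ) : ℤ)) = (c : ℤ) - a := by push_cast; ring
    rw [hdeg]
    exact key (2 * Wᶜ.card + Sᶜ.card) W S le_rfl hS
  | succ e ihe =>
    have hdeg : ((c : ℤ) - a + ((e + 1 : ℕ) : ℤ)) = ((c : ℤ) - a + e) + 1 := by push_cast; ring
    have hca : (a : ℤ) ≤ (c : ℤ) := by exact_mod_cast hac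
    have key : ∀ (m : ℕ) (W S : Finset (Fin n)), W.card ≤ m → a ≤ S.card →
        Hv k (restrict (link Δ S) W) ((c : ℤ) - a + ((e + 1 : ℕ) : ℤ)) := by
      intro m
      induction m with
      | zero =>
        intro W S hm hS
        refine Hv_no_faces k fun F hF => ?_
        have hFW : F ⊆ W := hF.2
        have hW : W = ∅ := Finset.card_eq_zero.mp (Nat.le_zero.mp hm)
        have : F = ∅ := Finset.subset_empty.mp (hW ▸ hFW)
        rw [this]
        simp only [Finset.card_empty, Nat.cast_zero]
        omega
      | succ m ih =>
        intro W S hm hS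
        by_cases hWS : (W \ S).Nonempty
        · obtain ⟨v, hv⟩ := hWS
          have hvW : v ∈ W := (Finset.mem_sdiff.mp hv).1
          have hvS : v ∉ S := (Finset.mem_sdiff.mp hv).2
          rw [hdeg]
          refine lemB k _ ?_ v ((c : ℤ) - a + e) ?_ ?_
          · exact isComplex_restrict _ (isComplex_link Δ hΔ S) _
          · rw [asv_restrict]
            have h1 := ih (W.erase v) S (by rw [Finset.card_erase_of_mem hvW]; omega) hS
            rwa [hdeg] at h1
          · rw [lkv_restrict Δ S W v hvW hvS]
            exact ihe (W.erase v) (insert v S)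
              (le_trans hS (Finset.card_le_card (Finset.subset_insert _ _)))
        · refine Hv_no_faces k fun F hF => ?_
          have hWsub : W ⊆ S := by
            rw [Finset.not_nonempty_iff_eq_empty, Finset.sdiff_eq_empty_iff_subset] at hWS
            exact hWS
          have hFS : F ⊆ S := hF.2.trans hWsub
          have hdis : Disjoint F S := hF.1.1
          have hFe : F = ∅ := by
            rw [Finset.eq_empty_iff_forall_notMem]
            exact fun x hx => Finset.disjoint_left.mp hdis hx (hFS hx)
          rw [hFe]
          simp only [Finset.card_empty, Nat.cast_zero]
          omega
    intro W S hS
    exact key W.card W S le_rfl hS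

end Aux

/-- if `Δ` is `(a+1)`-CLeray then so is every restriction `Δ_R`
(whose frame parameter, relative to the vertex set `R`, is `cR`). -/
theorem stmt13 (k : Type) [Field k] {n : ℕ} (Δ : Set (Finset (Fin n)))
    (hΔ : IsComplex Δ) (a c : ℕ) (hc : IsFrame Δ c) (hac : a ≤ c)
    (hCL : ∀ S : Finset (Fin n), a ≤ S.card →
      Subsingleton (ReducedHomology k (link Δ S) ((c : ℤ) - a)))
    (R : Finset (Fin n)) (cR : ℕ)
    (hcR1 : ∀ F ⊆ R, F.card ≤ cR → F ∈ restrict Δ R)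
    (hcR2 : ∃ F ⊆ R, F.card = cR + 1 ∧ F ∉ restrict Δ R) :
    a ≤ cR ∧ ∀ S ⊆ R, a ≤ S.card →
      Subsingleton (ReducedHomology k (link (restrict Δ R) S) ((cR : ℤ) - a)) := by
  have hcR : c ≤ cR := by
    by_contra h
    push_neg at h
    obtain ⟨F, hFR, hFcard, hFnot⟩ := hcR2
    exact hFnot ⟨hc.1 F (by omega), hFR⟩
  refine ⟨le_trans hac hcR, fun S hSR hSa => ?_⟩
  rw [← hv_iff k]
  rw [link_restrict Δ S R hSR]
  have hCL' : ∀ S : Finset (Fin n), a ≤ S.card → Hv k (link Δ S) ((c : ℤ) - a) :=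
    fun S hS => (hv_iff k).mpr (hCL S hS)
  have hdeg : ((cR : ℤ) - a) = (c : ℤ) - a + ((cR - c : ℕ) : ℤ) := by
    rw [Nat.cast_sub hcR]; ring
  rw [hdeg]
  exact main k Δ hΔ a c hac hCL' (cR - c) (R \ S) S hSa

end SCx
end

section
/- Let Δ be a simplicial complex on [n] of dimension d-1. Δ is in CM_{n-d-1} (i.e., Δ* is (c*+1)-CLeray, equivalently any two distinct facets of Δ* intersect in cardinality < c*) if and only if |F ∪ G| ≥ d + 2 for all distinct missing faces F, G of Δ. -/
open Finset

namespace SCx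

variable (k : Type) [Field k] {n : ℕ}

lemma facet_dual_iff {n : ℕ} (Δ : Set (Finset (Fin n))) (F : Finset (Fin n)) :
    IsFacet (dual Δ) F ↔ (Fᶜ ∉ Δ ∧ ∀ H ⊂ Fᶜ, H ∈ Δ) := by
  constructor
  · rintro ⟨h1, h2⟩
    refine ⟨h1, fun H hH => ?_⟩
    by_contra hHn
    have hmem : Hᶜ ∈ dual Δ := by simpa [dual] using hHn
    have hsub : F ⊆ Hᶜ := by
      have := Finset.compl_subset_compl.mpr hH.1
      simpa using this
    have hEq : F = Hᶜ := h2 Hᶜ hmem hsub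
    have : H = Fᶜ := by rw [hEq]; simp
    exact hH.2 (by rw [this])
  · rintro ⟨h1, h2⟩
    refine ⟨h1, fun G hG hFG => ?_⟩
    by_contra hne
    have hss : Gᶜ ⊂ Fᶜ := by
      refine ⟨Finset.compl_subset_compl.mpr hFG, fun hc => ?_⟩
      have h' := Finset.compl_subset_compl.mpr hc
      simp only [compl_compl] at h'
      exact hne (Finset.Subset.antisymm hFG h')
    exact hG (h2 _ hss)

/-- `Δ` is in `CM_{n-d-1}` (any two distinct facets of `Δ*` meet
in cardinality `< c*`) iff `|F ∪ G| ≥ d + 2` for all distinct missing faces. -/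
theorem stmt17 {n : ℕ} (Δ : Set (Finset (Fin n))) (hΔ : IsComplex Δ)
    (d cs : ℕ) (hd : IsDim Δ d) (hn : n = d + cs + 1) :
    (∀ F G : Finset (Fin n), IsFacet (dual Δ) F → IsFacet (dual Δ) G → F ≠ G →
        (F ∩ G).card < cs) ↔
    (∀ F G : Finset (Fin n),
        (F ∉ Δ ∧ ∀ F' ⊂ F, F' ∈ Δ) → (G ∉ Δ ∧ ∀ G' ⊂ G, G' ∈ Δ) →
        F ≠ G → d + 2 ≤ (F ∪ G).card) := by
  constructor
  · intro h F G hF hG hne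
    have hfF : IsFacet (dual Δ) Fᶜ := (facet_dual_iff Δ Fᶜ).mpr (by simpa using hF)
    have hfG : IsFacet (dual Δ) Gᶜ := (facet_dual_iff Δ Gᶜ).mpr (by simpa using hG)
    have hne' : Fᶜ ≠ Gᶜ := fun hc => hne (by simpa using congrArg compl hc)
    have hcard := h _ _ hfF hfG hne'
    rw [← Finset.compl_union, Finset.card_compl] at hcard
    have hle : (F ∪ G).card ≤ n := by simpa using Finset.card_le_univ (F ∪ G)
    simp only [Fintype.card_fin] at hcard
    omega
  · intro h F G hF hG hne
    obtain ⟨h1, h2⟩ := (facet_dual_iff Δ F).mp hF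
    obtain ⟨h3, h4⟩ := (facet_dual_iff Δ G).mp hG
    have hne' : Fᶜ ≠ Gᶜ := fun hc => hne (by simpa using congrArg compl hc)
    have hcard := h Fᶜ Gᶜ ⟨h1, h2⟩ ⟨h3, h4⟩ hne'
    rw [← Finset.compl_inter, Finset.card_compl] at hcard
    have hle : (F ∩ G).card ≤ n := by simpa using Finset.card_le_univ (F ∩ G)
    simp only [Fintype.card_fin] at hcard
    omega

end SCx
end
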